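/- Let b = (b_1,…,b_m) be a packing with b_1 < t and (m−1)·b_{m−1} > m·g − t (with m ≥ 2). Then for every finite multiset J of positive integers with total size Σ J ≤ m·g − ||b||_1, placing all items of J into the bin of load b_m keeps every bin load strictly below t; in particular b_m + (m·g − ||b||_1) < t, so no sequence of further items consistent with the capacity bound m·g can ever bring a bin load up to t. -/

import Mathlib

lemma sum_lower_bound (m : ℕ) (hm : 2 ≤ m) (b : Fin m → ℕ) (hb : Antitone b) :
    (m - 1) * b ⟨m - 2, by omega⟩ + b ⟨m - 1, by omega⟩ ≤ ∑ i, b i := by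
  set last : Fin m := ⟨m - 1, by omega⟩
  have hmem : last ∈ Finset.univ := Finset.mem_univ _
  rw [← Finset.add_sum_erase _ b hmem]
  have hcard : (Finset.univ.erase last).card = m - 1 := by
    rw [Finset.card_erase_of_mem hmem, Finset.card_univ, Fintype.card_fin]
  have hbound : ∀ i ∈ Finset.univ.erase last, b ⟨m - 2, by omega⟩ ≤ b i := by
    intro i hi
    have hne : i ≠ last := (Finset.mem_erase.mp hi).1
    have : i.val ≠ m - 1 := by
      intro h; exact hne (Fin.ext h)
    have hiv : i.val ≤ m - 2 := by omega
    exact hb (by exact hiv)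
  have := Finset.card_nsmul_le_sum (Finset.univ.erase last) b _ hbound
  rw [hcard, smul_eq_mul] at this
  rw [add_comm]
  exact Nat.add_le_add_left this _

/-- Let `b` be a packing (bin loads in non-increasing order, `b ⟨0⟩ = b₁` the largest and
`b ⟨m-1⟩ = b_m` the smallest) for `m ≥ 2` bins of capacity `g`, with target `t > g`.  Assume
`b₁ < t` and `(m−1)·b_{m−1} > m·g − t`.  Then for every finite multiset `J` of positive
integers whose total size satisfies `‖b‖₁ + Σ J ≤ m·g` (i.e. `Σ J ≤ m·g − ‖b‖₁`), placing
all items of `J` into the bin of load `b_m` keeps every bin load strictly below `t`; in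
particular `b_m + (m·g − ‖b‖₁) < t`, so no sequence of further items consistent with the
capacity bound `m·g` can ever bring a bin load up to `t`. -/
theorem no_bin_can_reach_target (m g t : ℕ) (hm : 2 ≤ m) (hg : 1 ≤ g) (hgt : g < t)
    (b : Fin m → ℕ) (hb : Antitone b)
    (h1 : b ⟨0, by omega⟩ < t)
    (h2 : m * g < (m - 1) * b ⟨m - 2, by omega⟩ + t) :
    (∀ J : Multiset ℕ, (∀ x ∈ J, 0 < x) → (∑ i, b i) + J.sum ≤ m * g →
      ∀ i : Fin m,
        (if i = (⟨m - 1, by omega⟩ : Fin m) then b i + J.sum else b i) < t) ∧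
    b ⟨m - 1, by omega⟩ + (m * g - ∑ i, b i) < t := by
  have hsum := sum_lower_bound m hm b hb
  have hb0 : ∀ i : Fin m, b i ≤ b ⟨0, by omega⟩ := fun i => hb (by simp [Fin.le_def])
  constructor
  · intro J hJ hJsum i
    split_ifs with h
    · subst h
      omega
    · exact lt_of_le_of_lt (hb0 i) h1
  · have := hb0 ⟨m - 1, by omega⟩
    omega
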